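/- Let Q ⊂ ℝ^d be a bounded, convex, open set with Q = −Q, and let Σ_u ⊆ {0, η₁, η₂}, Σ_n ⊆ {0, η₃, −η₃} be subsets of ℝ^d with −Σ_n = Σ_n. Assume û₀(ξ) = 0 for all ξ ∉ ⋃_{η∈Σ_u}(η+Q) and n̂₀(ξ) = 0 for all ξ ∉ ⋃_{η∈Σ_n}(η+Q), and that n̂₀(−ξ) = conj(n̂₀(ξ)) for all ξ. For integers n₁, n₂ ≥ 0 set K_{n₁,n₂} := { Σ_{j=1}^{n₁} a_j + Σ_{j=1}^{n₂} b_j : a_j ∈ Σ_u ∪ (−Σ_u), b_j ∈ Σ_n } when n₁ ≠ 1, K_{1,n₂} := { a + Σ_{j=1}^{n₂} b_j : a ∈ Σ_u, b_j ∈ Σ_n }, and Σₙ⁽¹⁾ := ⋃_{n₁+n₂=n, n₁ odd} K_{n₁,n₂}, Σₙ⁽²⁾ := ⋃_{n₁+n₂=n, n₁ even} K_{n₁,n₂}. Then for every n ≥ 1 and every t ≥ 0: Fₙ(t,ξ) = 0 for all ξ ∉ ⋃_{η∈Σₙ⁽¹⁾}(η + nQ), and Gₙ(t,ξ) = 0 for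 all ξ ∉ ⋃_{η∈Σₙ⁽²⁾}(η + nQ), where nQ := {nξ : ξ ∈ Q}. -/

import Mathlib

open MeasureTheory Set
open scoped Pointwise

noncomputable section

/-- The set `K_{n₁,n₂}` of sums of `n₁` elements of `Σu ∪ (−Σu)` (just `Σu` if `n₁ = 1`)
and `n₂` elements of `Σn`. -/
def Kset {d : ℕ} (Su Sn : Set (EuclideanSpace ℝ (Fin d))) (n₁ n₂ : ℕ) :
    Set (EuclideanSpace ℝ (Fin d)) :=
  if n₁ = 1 then
    {v | ∃ a ∈ Su, ∃ b : Fin n₂ → EuclideanSpace ℝ (Fin d),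
      (∀ j, b j ∈ Sn) ∧ v = a + ∑ j, b j}
  else
    {v | ∃ a : Fin n₁ → EuclideanSpace ℝ (Fin d), ∃ b : Fin n₂ → EuclideanSpace ℝ (Fin d),
      (∀ j, a j ∈ Su ∪ (-Su)) ∧ (∀ j, b j ∈ Sn) ∧ v = ∑ j, a j + ∑ j, b j}

/-- `Σₙ⁽¹⁾`: union of the `K_{n₁,n₂}` with `n₁ + n₂ = n` and `n₁` odd. -/
def SigOdd {d : ℕ} (Su Sn : Set (EuclideanSpace ℝ (Fin d))) (n : ℕ) :
    Set (EuclideanSpace ℝ (Fin d)) :=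
  ⋃ (p : ℕ × ℕ) (_ : p.1 + p.2 = n ∧ Odd p.1), Kset Su Sn p.1 p.2

/-- `Σₙ⁽²⁾`: union of the `K_{n₁,n₂}` with `n₁ + n₂ = n` and `n₁` even. -/
def SigEven {d : ℕ} (Su Sn : Set (EuclideanSpace ℝ (Fin d))) (n : ℕ) :
    Set (EuclideanSpace ℝ (Fin d)) :=
  ⋃ (p : ℕ × ℕ) (_ : p.1 + p.2 = n ∧ Even p.1), Kset Su Sn p.1 p.2

/-- `F` and `G` are the Fourier-side Picard iterates of the reduced Zakharov system with
Fourier-transformed initial data `u₀` (Schrödinger part) and `n₀` (wave part). -/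
def IsPicardIterates {d : ℕ} (u₀ n₀ : EuclideanSpace ℝ (Fin d) → ℂ)
    (F G : ℕ → ℝ → EuclideanSpace ℝ (Fin d) → ℂ) : Prop :=
  (∀ t ξ, F 1 t ξ = Complex.exp (-Complex.I * ((t * ‖ξ‖ ^ 2 : ℝ) : ℂ)) * u₀ ξ) ∧
  (∀ t ξ, G 1 t ξ = Complex.exp (-Complex.I * ((t * ‖ξ‖ : ℝ) : ℂ)) * n₀ ξ) ∧
  (∀ n, 2 ≤ n → ∀ t ξ, F n t ξ =
    -Complex.I * ∑ k ∈ Finset.Ico 1 n,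
      ∫ σ in (0:ℝ)..t,
        Complex.exp (-Complex.I * (((t - σ) * ‖ξ‖ ^ 2 : ℝ) : ℂ)) *
          ∫ η, F k σ η *
            ((G (n - k) σ (ξ - η) + (starRingEnd ℂ) (G (n - k) σ (-(ξ - η)))) / 2)) ∧
  (∀ n, 2 ≤ n → ∀ t ξ, G n t ξ =
    -Complex.I * ∑ k ∈ Finset.Ico 1 n,
      ∫ σ in (0:ℝ)..t,
        Complex.exp (-Complex.I * (((t - σ) * ‖ξ‖ : ℝ) : ℂ)) * ((‖ξ‖ : ℝ) : ℂ) *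
          ∫ η, F k σ η * (starRingEnd ℂ) (F (n - k) σ (η - ξ)))

namespace ZakAux

variable {d : ℕ}

/-- Generic version of `Kset` without the special case at `n₁ = 1`. -/
def Kg (Su Sn : Set (EuclideanSpace ℝ (Fin d))) (n₁ n₂ : ℕ) :
    Set (EuclideanSpace ℝ (Fin d)) :=
  {v | ∃ a : Fin n₁ → EuclideanSpace ℝ (Fin d), ∃ b : Fin n₂ → EuclideanSpace ℝ (Fin d),
    (∀ j, a j ∈ Su ∪ (-Su)) ∧ (∀ j, b j ∈ Sn) ∧ v = ∑ j, a j + ∑ j, b j}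

lemma sum_append {m n : ℕ} (f : Fin m → EuclideanSpace ℝ (Fin d))
    (g : Fin n → EuclideanSpace ℝ (Fin d)) :
    ∑ j, Fin.append f g j = ∑ j, f j + ∑ j, g j := by
  simp [Fin.sum_univ_add, Fin.append_left, Fin.append_right]

lemma Kg_eq_Kset (Su Sn : Set (EuclideanSpace ℝ (Fin d))) {n₁ n₂ : ℕ} (h : n₁ ≠ 1) :
    Kg Su Sn n₁ n₂ = Kset Su Sn n₁ n₂ := by
  simp [Kg, Kset, h]

lemma Kset_subset_Kg (Su Sn : Set (EuclideanSpace ℝ (Fin d))) (n₁ n₂ : ℕ) :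
    Kset Su Sn n₁ n₂ ⊆ Kg Su Sn n₁ n₂ := by
  intro v hv
  by_cases h : n₁ = 1
  · subst h
    rw [Kset, if_pos rfl] at hv
    obtain ⟨a, ha, b, hb, hv⟩ := hv
    exact ⟨fun _ => a, b, fun _ => Or.inl ha, hb, by simpa using hv⟩
  · rw [← Kg_eq_Kset Su Sn h] at hv; exact hv

lemma Kg_add {Su Sn : Set (EuclideanSpace ℝ (Fin d))} {n₁ n₂ m₁ m₂ : ℕ}
    {x y : EuclideanSpace ℝ (Fin d)}
    (hx : x ∈ Kg Su Sn n₁ n₂) (hy : y ∈ Kg Su Sn m₁ m₂) :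
    x + y ∈ Kg Su Sn (n₁ + m₁) (n₂ + m₂) := by
  obtain ⟨a, b, ha, hb, rfl⟩ := hx
  obtain ⟨a', b', ha', hb', rfl⟩ := hy
  refine ⟨Fin.append a a', Fin.append b b', ?_, ?_, ?_⟩
  · exact fun j => Fin.addCases (fun i => by simpa [Fin.append_left] using ha i)
      (fun i => by simpa [Fin.append_right] using ha' i) j
  · exact fun j => Fin.addCases (fun i => by simpa [Fin.append_left] using hb i)
      (fun i => by simpa [Fin.append_right] using hb' i) j
  · rw [sum_append, sum_append]; abel

lemma Kg_neg {Su Sn : Set (EuclideanSpace ℝ (Fin d))} (hSn : -Sn = Sn) {n₁ n₂ : ℕ}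
    {x : EuclideanSpace ℝ (Fin d)} (hx : x ∈ Kg Su Sn n₁ n₂) : -x ∈ Kg Su Sn n₁ n₂ := by
  obtain ⟨a, b, ha, hb, rfl⟩ := hx
  refine ⟨fun j => -(a j), fun j => -(b j), ?_, ?_, ?_⟩
  · intro j
    rcases ha j with h | h
    · exact Or.inr (by simpa [Set.mem_neg] using h)
    · exact Or.inl (by simpa [Set.mem_neg] using h)
  · intro j
    rw [← hSn]
    simpa [Set.mem_neg] using hb j
  · simp only [Finset.sum_neg_distrib]; abel

lemma Kset_one_add {Su Sn : Set (EuclideanSpace ℝ (Fin d))} {k₂ m₂ : ℕ}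
    {x y : EuclideanSpace ℝ (Fin d)}
    (hx : x ∈ Kset Su Sn 1 k₂) (hy : y ∈ Kg Su Sn 0 m₂) :
    x + y ∈ Kset Su Sn 1 (k₂ + m₂) := by
  rw [Kset, if_pos rfl] at hx ⊢
  obtain ⟨a, ha, b, hb, rfl⟩ := hx
  obtain ⟨a', b', _, hb', rfl⟩ := hy
  refine ⟨a, ha, Fin.append b b', ?_, ?_⟩
  · exact fun j => Fin.addCases (fun i => by simpa [Fin.append_left] using hb i)
      (fun i => by simpa [Fin.append_right] using hb' i) j
  · rw [sum_append]
    have : ∑ j, a' j = 0 := by simp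
    rw [this]; abel

lemma mem_SigOdd_iff {Su Sn : Set (EuclideanSpace ℝ (Fin d))} {n : ℕ}
    {x : EuclideanSpace ℝ (Fin d)} :
    x ∈ SigOdd Su Sn n ↔ ∃ n₁ n₂, n₁ + n₂ = n ∧ Odd n₁ ∧ x ∈ Kset Su Sn n₁ n₂ := by
  constructor
  · intro h
    simp only [SigOdd, mem_iUnion] at h
    obtain ⟨⟨n₁, n₂⟩, ⟨hsum, hodd⟩, hx⟩ := h
    exact ⟨n₁, n₂, hsum, hodd, hx⟩
  · rintro ⟨n₁, n₂, hsum, hodd, hx⟩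
    simp only [SigOdd, mem_iUnion]
    exact ⟨(n₁, n₂), ⟨hsum, hodd⟩, hx⟩

lemma mem_SigEven_iff {Su Sn : Set (EuclideanSpace ℝ (Fin d))} {n : ℕ}
    {x : EuclideanSpace ℝ (Fin d)} :
    x ∈ SigEven Su Sn n ↔ ∃ n₁ n₂, n₁ + n₂ = n ∧ Even n₁ ∧ x ∈ Kset Su Sn n₁ n₂ := by
  constructor
  · intro h
    simp only [SigEven, mem_iUnion] at h
    obtain ⟨⟨n₁, n₂⟩, ⟨hsum, heven⟩, hx⟩ := h
    exact ⟨n₁, n₂, hsum, heven, hx⟩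
  · rintro ⟨n₁, n₂, hsum, heven, hx⟩
    simp only [SigEven, mem_iUnion]
    exact ⟨(n₁, n₂), ⟨hsum, heven⟩, hx⟩

lemma sigOdd_add_sigEven {Su Sn : Set (EuclideanSpace ℝ (Fin d))} {k m : ℕ}
    {x y : EuclideanSpace ℝ (Fin d)}
    (hx : x ∈ SigOdd Su Sn k) (hy : y ∈ SigEven Su Sn m) :
    x + y ∈ SigOdd Su Sn (k + m) := by
  rw [mem_SigOdd_iff] at hx ⊢
  rw [mem_SigEven_iff] at hy
  obtain ⟨k₁, k₂, hk, hok, hxK⟩ := hx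
  obtain ⟨m₁, m₂, hm, hem, hyK⟩ := hy
  refine ⟨k₁ + m₁, k₂ + m₂, by omega, hok.add_even hem, ?_⟩
  by_cases h1 : k₁ + m₁ = 1
  · have hk1 : k₁ = 1 := by
      have := Nat.odd_iff.mp hok; omega
    have hm0 : m₁ = 0 := by omega
    subst hk1; subst hm0
    exact Kset_one_add hxK (Kset_subset_Kg _ _ _ _ hyK)
  · rw [← Kg_eq_Kset Su Sn h1]
    exact Kg_add (Kset_subset_Kg _ _ _ _ hxK) (Kset_subset_Kg _ _ _ _ hyK)

lemma sigEven_neg {Su Sn : Set (EuclideanSpace ℝ (Fin d))} (hSn : -Sn = Sn) {m : ℕ}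
    {x : EuclideanSpace ℝ (Fin d)} (hx : x ∈ SigEven Su Sn m) : -x ∈ SigEven Su Sn m := by
  rw [mem_SigEven_iff] at hx ⊢
  obtain ⟨m₁, m₂, hm, hem, hxK⟩ := hx
  have h1 : m₁ ≠ 1 := by
    have := Nat.even_iff.mp hem; omega
  refine ⟨m₁, m₂, hm, hem, ?_⟩
  rw [← Kg_eq_Kset Su Sn h1] at hxK ⊢
  exact Kg_neg hSn hxK

lemma sigOdd_sub_sigOdd {Su Sn : Set (EuclideanSpace ℝ (Fin d))} (hSn : -Sn = Sn) {k m : ℕ}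
    {x y : EuclideanSpace ℝ (Fin d)}
    (hx : x ∈ SigOdd Su Sn k) (hy : y ∈ SigOdd Su Sn m) :
    x - y ∈ SigEven Su Sn (k + m) := by
  rw [mem_SigOdd_iff] at hx hy
  rw [mem_SigEven_iff]
  obtain ⟨k₁, k₂, hk, hok, hxK⟩ := hx
  obtain ⟨m₁, m₂, hm, hom, hyK⟩ := hy
  have h1 : k₁ + m₁ ≠ 1 := by
    have := Nat.odd_iff.mp hok; have := Nat.odd_iff.mp hom; omega
  refine ⟨k₁ + m₁, k₂ + m₂, by omega, hok.add_odd hom, ?_⟩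
  rw [← Kg_eq_Kset Su Sn h1, sub_eq_add_neg]
  exact Kg_add (Kset_subset_Kg _ _ _ _ hxK) (Kg_neg hSn (Kset_subset_Kg _ _ _ _ hyK))

lemma Su_subset_sigOdd_one (Su Sn : Set (EuclideanSpace ℝ (Fin d))) :
    Su ⊆ SigOdd Su Sn 1 := by
  intro a ha
  rw [mem_SigOdd_iff]
  refine ⟨1, 0, rfl, odd_one, ?_⟩
  rw [Kset, if_pos rfl]
  exact ⟨a, ha, Fin.elim0, fun j => j.elim0, by simp⟩

lemma Sn_subset_sigEven_one (Su Sn : Set (EuclideanSpace ℝ (Fin d))) :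
    Sn ⊆ SigEven Su Sn 1 := by
  intro b hb
  rw [mem_SigEven_iff]
  refine ⟨0, 1, rfl, Even.zero, ?_⟩
  rw [Kset, if_neg (by norm_num)]
  exact ⟨Fin.elim0, fun _ => b, fun j => j.elim0, fun _ => hb, by simp⟩

lemma addQ {Q : Set (EuclideanSpace ℝ (Fin d))} (hQconv : Convex ℝ Q) (k m : ℕ)
    {x y : EuclideanSpace ℝ (Fin d)}
    (hx : x ∈ (k : ℝ) • Q) (hy : y ∈ (m : ℝ) • Q) : x + y ∈ ((k + m : ℕ) : ℝ) • Q := by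
  have h := hQconv.add_smul (by positivity : (0:ℝ) ≤ (k:ℝ)) (by positivity : (0:ℝ) ≤ (m:ℝ))
  rw [Nat.cast_add, h]
  exact Set.add_mem_add hx hy

lemma negQ {Q : Set (EuclideanSpace ℝ (Fin d))} (hQsymm : Q = -Q) (m : ℝ)
    {y : EuclideanSpace ℝ (Fin d)} (hy : y ∈ m • Q) : -y ∈ m • Q := by
  rw [hQsymm, Set.smul_set_neg, Set.mem_neg, neg_neg]
  exact hy

lemma intervalIntegral_zero_of_eqOn {f : ℝ → ℂ} {a b : ℝ}
    (h : ∀ σ ∈ Set.uIcc a b, f σ = 0) : ∫ σ in a..b, f σ = 0 := by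
  rw [intervalIntegral.integral_congr (g := fun _ => 0) h]
  simp

lemma integral_zero_of_forall {α : Type*} [MeasurableSpace α] {μ : Measure α} {f : α → ℂ}
    (h : ∀ x, f x = 0) : ∫ x, f x ∂μ = 0 := by
  have : f = fun _ => 0 := funext h
  rw [this]
  exact integral_zero _ _

end ZakAux

open ZakAux in
theorem statement_4 (d : ℕ) (hd : 1 ≤ d)
    (Q : Set (EuclideanSpace ℝ (Fin d)))
    (hQbdd : Bornology.IsBounded Q) (hQconv : Convex ℝ Q) (hQopen : IsOpen Q)
    (hQsymm : Q = -Q)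
    (η₁ η₂ η₃ : EuclideanSpace ℝ (Fin d))
    (Su Sn : Set (EuclideanSpace ℝ (Fin d)))
    (hSu : Su ⊆ {0, η₁, η₂}) (hSn : Sn ⊆ {0, η₃, -η₃}) (hSnsymm : -Sn = Sn)
    (u₀ n₀ : EuclideanSpace ℝ (Fin d) → ℂ)
    (hu₀meas : Measurable u₀) (hn₀meas : Measurable n₀)
    (hu₀bdd : ∃ M : ℝ, ∀ ξ, ‖u₀ ξ‖ ≤ M) (hn₀bdd : ∃ M : ℝ, ∀ ξ, ‖n₀ ξ‖ ≤ M)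
    (hu₀supp : ∀ ξ, ξ ∉ (⋃ η ∈ Su, {ζ : EuclideanSpace ℝ (Fin d) | ζ - η ∈ Q}) → u₀ ξ = 0)
    (hn₀supp : ∀ ξ, ξ ∉ (⋃ η ∈ Sn, {ζ : EuclideanSpace ℝ (Fin d) | ζ - η ∈ Q}) → n₀ ξ = 0)
    (hn₀real : ∀ ξ, n₀ (-ξ) = (starRingEnd ℂ) (n₀ ξ))
    (F G : ℕ → ℝ → EuclideanSpace ℝ (Fin d) → ℂ)
    (hFG : IsPicardIterates u₀ n₀ F G) :
    ∀ n : ℕ, 1 ≤ n → ∀ t : ℝ, 0 ≤ t →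
      (∀ ξ, ξ ∉ (⋃ η ∈ SigOdd Su Sn n, {ζ : EuclideanSpace ℝ (Fin d) | ζ - η ∈ (n : ℝ) • Q}) →
        F n t ξ = 0) ∧
      (∀ ξ, ξ ∉ (⋃ η ∈ SigEven Su Sn n, {ζ : EuclideanSpace ℝ (Fin d) | ζ - η ∈ (n : ℝ) • Q}) →
        G n t ξ = 0) := by
  obtain ⟨hFone, hGone, hFrec, hGrec⟩ := hFG
  intro n
  induction n using Nat.strong_induction_on with
  | _ n ih =>
  intro hn t ht
  rcases eq_or_lt_of_le hn with h1 | h2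
  · -- base case n = 1
    subst h1
    constructor
    · intro ξ hξ
      rw [hFone t ξ]
      have hu : u₀ ξ = 0 := by
        apply hu₀supp
        intro hmem
        apply hξ
        simp only [mem_iUnion, mem_setOf_eq] at hmem ⊢
        obtain ⟨η, hη, hQm⟩ := hmem
        exact ⟨η, Su_subset_sigOdd_one Su Sn hη, by simpa using hQm⟩
      rw [hu, mul_zero]
    · intro ξ hξ
      rw [hGone t ξ]
      have hn0 : n₀ ξ = 0 := by
        apply hn₀supp
        intro hmem
        apply hξ
        simp only [mem_iUnion, mem_setOf_eq] at hmem ⊢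
        obtain ⟨η, hη, hQm⟩ := hmem
        exact ⟨η, Sn_subset_sigEven_one Su Sn hη, by simpa using hQm⟩
      rw [hn0, mul_zero]
  · -- inductive step, 2 ≤ n
    have h2' : 2 ≤ n := h2
    constructor
    · intro ξ hξ
      simp only [mem_iUnion, mem_setOf_eq, not_exists] at hξ
      rw [hFrec n h2' t ξ]
      refine mul_eq_zero_of_right _ (Finset.sum_eq_zero fun k hk => ?_)
      rw [Finset.mem_Ico] at hk
      obtain ⟨hk1, hkn⟩ := hk
      apply intervalIntegral_zero_of_eqOn
      intro σ hσ
      have hσ0 : 0 ≤ σ := by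
        rw [Set.uIcc_of_le ht] at hσ; exact hσ.1
      have hIk := ih k (by omega) (by omega) σ hσ0
      have hInk := ih (n - k) (by omega) (by omega) σ hσ0
      refine mul_eq_zero_of_right _ (integral_zero_of_forall fun η => ?_)
      by_cases hFk : F k σ η = 0
      · rw [hFk, zero_mul]
      · have hηmem : η ∈ ⋃ a ∈ SigOdd Su Sn k,
            {ζ : EuclideanSpace ℝ (Fin d) | ζ - a ∈ ((k : ℕ) : ℝ) • Q} := by
          by_contra hc
          exact hFk (hIk.1 η hc)
        simp only [mem_iUnion, mem_setOf_eq] at hηmem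
        obtain ⟨a, haS, haQ⟩ := hηmem
        have hG1 : G (n - k) σ (ξ - η) = 0 := by
          by_contra hc
          have hmem : ξ - η ∈ ⋃ b ∈ SigEven Su Sn (n - k),
              {ζ : EuclideanSpace ℝ (Fin d) | ζ - b ∈ (((n - k) : ℕ) : ℝ) • Q} := by
            by_contra hc2
            exact hc (hInk.2 _ hc2)
          simp only [mem_iUnion, mem_setOf_eq] at hmem
          obtain ⟨b, hbS, hbQ⟩ := hmem
          have habS : a + b ∈ SigOdd Su Sn n := by
            have := sigOdd_add_sigEven haS hbS
            rwa [show k + (n - k) = n by omega] at this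
          apply hξ (a + b) habS
          have hsum := addQ hQconv k (n - k) haQ hbQ
          rw [show k + (n - k) = n by omega] at hsum
          have heq : ξ - (a + b) = (η - a) + ((ξ - η) - b) := by abel
          rwa [heq]
        have hG2 : G (n - k) σ (-(ξ - η)) = 0 := by
          by_contra hc
          have hmem : -(ξ - η) ∈ ⋃ b ∈ SigEven Su Sn (n - k),
              {ζ : EuclideanSpace ℝ (Fin d) | ζ - b ∈ (((n - k) : ℕ) : ℝ) • Q} := by
            by_contra hc2
            exact hc (hInk.2 _ hc2)
          simp only [mem_iUnion, mem_setOf_eq] at hmem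
          obtain ⟨b, hbS, hbQ⟩ := hmem
          have habS : a + (-b) ∈ SigOdd Su Sn n := by
            have := sigOdd_add_sigEven haS (sigEven_neg hSnsymm hbS)
            rwa [show k + (n - k) = n by omega] at this
          apply hξ (a + (-b)) habS
          have hbQ' : (ξ - η) - (-b) ∈ (((n - k) : ℕ) : ℝ) • Q := by
            have := negQ hQsymm _ hbQ
            rwa [show -(-(ξ - η) - b) = (ξ - η) - (-b) by abel] at this
          have hsum := addQ hQconv k (n - k) haQ hbQ'
          rw [show k + (n - k) = n by omega] at hsum
          have heq : ξ - (a + (-b)) = (η - a) + ((ξ - η) - (-b)) := by abel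
          rwa [heq]
        rw [hG1, hG2, map_zero, add_zero, zero_div, mul_zero]
    · intro ξ hξ
      simp only [mem_iUnion, mem_setOf_eq, not_exists] at hξ
      rw [hGrec n h2' t ξ]
      refine mul_eq_zero_of_right _ (Finset.sum_eq_zero fun k hk => ?_)
      rw [Finset.mem_Ico] at hk
      obtain ⟨hk1, hkn⟩ := hk
      apply intervalIntegral_zero_of_eqOn
      intro σ hσ
      have hσ0 : 0 ≤ σ := by
        rw [Set.uIcc_of_le ht] at hσ; exact hσ.1
      have hIk := ih k (by omega) (by omega) σ hσ0
      have hInk := ih (n - k) (by omega) (by omega) σ hσ0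
      refine mul_eq_zero_of_right _ (integral_zero_of_forall fun η => ?_)
      by_cases hFk : F k σ η = 0
      · rw [hFk, zero_mul]
      · have hηmem : η ∈ ⋃ a ∈ SigOdd Su Sn k,
            {ζ : EuclideanSpace ℝ (Fin d) | ζ - a ∈ ((k : ℕ) : ℝ) • Q} := by
          by_contra hc
          exact hFk (hIk.1 η hc)
        simp only [mem_iUnion, mem_setOf_eq] at hηmem
        obtain ⟨a, haS, haQ⟩ := hηmem
        have hF2 : F (n - k) σ (η - ξ) = 0 := by
          by_contra hc
          have hmem : η - ξ ∈ ⋃ b ∈ SigOdd Su Sn (n - k),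
              {ζ : EuclideanSpace ℝ (Fin d) | ζ - b ∈ (((n - k) : ℕ) : ℝ) • Q} := by
            by_contra hc2
            exact hc (hInk.1 _ hc2)
          simp only [mem_iUnion, mem_setOf_eq] at hmem
          obtain ⟨b, hbS, hbQ⟩ := hmem
          have habS : a - b ∈ SigEven Su Sn n := by
            have := sigOdd_sub_sigOdd hSnsymm haS hbS
            rwa [show k + (n - k) = n by omega] at this
          apply hξ (a - b) habS
          have hbQ' : ξ - η + b ∈ (((n - k) : ℕ) : ℝ) • Q := by
            have := negQ hQsymm _ hbQ
            rwa [show -(η - ξ - b) = ξ - η + b by abel] at this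
          have hsum := addQ hQconv k (n - k) haQ hbQ'
          rw [show k + (n - k) = n by omega] at hsum
          have heq : ξ - (a - b) = (η - a) + (ξ - η + b) := by abel
          rwa [heq]
        rw [hF2, map_zero, mul_zero]


end
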